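/- Let O be an order in a number field K with conductor f. The maps a ↦ a ∩ O and c ↦ c·O_K are mutually inverse multiplicative bijections between the set of ideals of O_K relatively prime to f and the set of ideals of O relatively prime to f. -/
import Mathlib


open NumberField

/-- If `w ∈ c·𝓞 K` and `v ∈ f` (the conductor, contained in `O`), then `w·v ∈ c`. -/
lemma aux_mul_f_mem {K : Type*} [Field K] [NumberField K]
    (O : Subring (𝓞 K)) (f : Ideal (𝓞 K)) (hfO : ∀ y ∈ f, y ∈ O)
    (c : Ideal O) {w : 𝓞 K} (hw : w ∈ c.map O.subtype) :
    ∀ v ∈ f, ∃ h : w * v ∈ O, (⟨w * v, h⟩ : O) ∈ c := by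
  have hw' : w ∈ Ideal.span (O.subtype '' c) := hw
  clear hw
  induction hw' using Submodule.span_induction with
  | mem x hx =>
    rintro v hv
    obtain ⟨y, hy, rfl⟩ := hx
    exact ⟨O.mul_mem y.2 (hfO v hv),
      Ideal.mul_mem_right (⟨v, hfO v hv⟩ : O) _ hy⟩
  | zero =>
    intro v hv
    refine ⟨by simp [O.zero_mem], ?_⟩
    convert c.zero_mem
    ext; simp
  | add x y hx hy ihx ihy =>
    intro v hv
    obtain ⟨h1, h1'⟩ := ihx v hv
    obtain ⟨h2, h2'⟩ := ihy v hv
    refine ⟨by rw [add_mul]; exact O.add_mem h1 h2, ?_⟩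
    have : (⟨(x + y) * v, by rw [add_mul]; exact O.add_mem h1 h2⟩ : O)
        = ⟨x * v, h1⟩ + ⟨y * v, h2⟩ := by ext; simp [add_mul]
    rw [this]
    exact c.add_mem h1' h2'
  | smul z x hx ih =>
    intro v hv
    obtain ⟨h1, h1'⟩ := ih (v * z) (Ideal.mul_mem_right _ _ hv)
    have he : (z • x) * v = x * (v * z) := by
      simp only [smul_eq_mul]; ring
    refine ⟨by rw [he]; exact h1, ?_⟩
    convert h1' using 2

set_option maxHeartbeats 1000000 in
/-- The maps `a ↦ a ∩ O` and `c ↦ c · 𝓞 K` are mutually inverse multiplicative bijections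
between the ideals of `𝓞 K` relatively prime to the conductor `f` and the ideals of `O`
relatively prime to `f`. -/
theorem contraction_extension_bijection {K : Type*} [Field K] [NumberField K]
    (O : Subring (𝓞 K)) (hO : O.toAddSubgroup.index ≠ 0)
    (f : Ideal (𝓞 K)) (hf : ∀ a : 𝓞 K, a ∈ f ↔ ∀ x : 𝓞 K, a * x ∈ O) :
    (∀ a : Ideal (𝓞 K), a ⊔ f = ⊤ →
        a.comap O.subtype ⊔ f.comap O.subtype = ⊤ ∧ (a.comap O.subtype).map O.subtype = a) ∧
    (∀ c : Ideal O, c ⊔ f.comap O.subtype = ⊤ →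
        c.map O.subtype ⊔ f = ⊤ ∧ (c.map O.subtype).comap O.subtype = c) ∧
    (∀ a b : Ideal (𝓞 K), a ⊔ f = ⊤ → b ⊔ f = ⊤ →
        (a * b).comap O.subtype = a.comap O.subtype * b.comap O.subtype) := by
  have hfO : ∀ y ∈ f, y ∈ O := fun y hy => by simpa using (hf y).mp hy 1
  -- part 1
  have part1 : ∀ a : Ideal (𝓞 K), a ⊔ f = ⊤ →
      a.comap O.subtype ⊔ f.comap O.subtype = ⊤ ∧ (a.comap O.subtype).map O.subtype = a := by
    intro a ha
    obtain ⟨x, hx, y, hy, hxy⟩ := Submodule.mem_sup.mp (ha ▸ Submodule.mem_top :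
      (1 : 𝓞 K) ∈ a ⊔ f)
    have hyO : y ∈ O := hfO y hy
    have hxO : x ∈ O := by
      have : x = 1 - y := by rw [← hxy]; ring
      rw [this]; exact O.sub_mem O.one_mem hyO
    constructor
    · rw [Ideal.eq_top_iff_one]
      exact Submodule.mem_sup.mpr ⟨⟨x, hxO⟩, Ideal.mem_comap.mpr hx,
        ⟨y, hyO⟩, Ideal.mem_comap.mpr hy, Subtype.ext hxy⟩
    · apply le_antisymm
      · exact Ideal.map_le_iff_le_comap.mpr le_rfl
      · intro z hz
        have h1 : x * z ∈ (a.comap O.subtype).map O.subtype := by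
          have hxm : x ∈ (a.comap O.subtype).map O.subtype :=
            Ideal.mem_map_of_mem _ (Ideal.mem_comap.mpr hx : (⟨x, hxO⟩ : O) ∈ _)
          exact Ideal.mul_mem_right _ _ hxm
        have h2 : y * z ∈ (a.comap O.subtype).map O.subtype := by
          have hyz : y * z ∈ a := Ideal.mul_mem_left _ _ hz
          have hyzO : y * z ∈ O := hfO _ (Ideal.mul_mem_right _ _ hy)
          exact Ideal.mem_map_of_mem _ (Ideal.mem_comap.mpr hyz : (⟨y * z, hyzO⟩ : O) ∈ _)
        have : z = x * z + y * z := by rw [← add_mul, hxy, one_mul]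
        rw [this]
        exact Ideal.add_mem _ h1 h2
  -- part 2
  have part2 : ∀ c : Ideal O, c ⊔ f.comap O.subtype = ⊤ →
      c.map O.subtype ⊔ f = ⊤ ∧ (c.map O.subtype).comap O.subtype = c := by
    intro c hc
    obtain ⟨u, hu, v, hv, huv⟩ := Submodule.mem_sup.mp (hc ▸ Submodule.mem_top :
      (1 : O) ∈ c ⊔ f.comap O.subtype)
    have huv' : (u : 𝓞 K) + (v : 𝓞 K) = 1 := congrArg Subtype.val huv
    constructor
    · rw [Ideal.eq_top_iff_one]
      exact Submodule.mem_sup.mpr ⟨(u : 𝓞 K), Ideal.mem_map_of_mem _ hu,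
        (v : 𝓞 K), Ideal.mem_comap.mp hv, huv'⟩
    · apply le_antisymm
      · intro w hw
        have hwm : (w : 𝓞 K) ∈ c.map O.subtype := Ideal.mem_comap.mp hw
        obtain ⟨h1, h1'⟩ := aux_mul_f_mem O f hfO c hwm (v : 𝓞 K) (Ideal.mem_comap.mp hv)
        have h1'' : w * v ∈ c := h1'
        have : w = w * u + w * v := by
          rw [← mul_add, huv, mul_one]
        rw [this]
        exact c.add_mem (Ideal.mul_mem_left _ _ hu) h1''
      · exact Ideal.le_comap_map
  refine ⟨part1, part2, ?_⟩
  -- part 3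
  intro a b ha hb
  have h1 := part1 a ha
  have h2 := part1 b hb
  have hcop : a.comap O.subtype * b.comap O.subtype ⊔ f.comap O.subtype = ⊤ := by
    have c1 := (Ideal.isCoprime_iff_sup_eq).mpr h1.1
    have c2 := (Ideal.isCoprime_iff_sup_eq).mpr h2.1
    exact (Ideal.isCoprime_iff_sup_eq).mp (c1.mul_left c2)
  have h3 := part2 _ hcop
  have hmap : (a.comap O.subtype * b.comap O.subtype).map O.subtype = a * b := by
    rw [Ideal.map_mul, h1.2, h2.2]
  rw [← h3.2, hmap]
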